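/- Let H be a complex Hilbert space and let x be a positive bounded operator on H. Then x is the least upper bound, in the Loewner order on bounded selfadjoint operators on H, of the set of positive finite-rank bounded operators y with y ≤ x. -/

import Mathlib

open scoped ComplexOrder

/-- The Loewner order on bounded operators on a complex Hilbert space:
`S ≤ T` iff `⟨(T - S) ξ, ξ⟩ ≥ 0` for all `ξ`. -/
def LoewnerLE {H : Type*} [NormedAddCommGroup H] [InnerProductSpace ℂ H]
    (S T : H →L[ℂ] H) : Prop :=
  ∀ ξ : H, 0 ≤ (inner ℂ ((T - S) ξ) ξ : ℂ)

open scoped InnerProductSpace in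
/-- A positive `LoewnerLE`-operator is `IsPositive`. -/
lemma LoewnerLE.isPositive {H : Type*} [NormedAddCommGroup H] [InnerProductSpace ℂ H]
    [CompleteSpace H] {x : H →L[ℂ] H} (hx : LoewnerLE 0 x) : x.IsPositive := by
  rw [ContinuousLinearMap.isPositive_iff_complex]
  intro ξ
  have h := hx ξ
  simp only [sub_zero] at h
  rw [Complex.le_def] at h
  simp only [Complex.zero_re, Complex.zero_im] at h
  exact ⟨Complex.ext_iff.mpr ⟨by simp, by simp [h.2]⟩, by simpa [RCLike.re_to_complex] using h.1⟩

open scoped InnerProductSpace in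
/-- Cauchy–Schwarz for the semi-inner product `(a, b) ↦ ⟪x a, b⟫` of a positive operator. -/
lemma cauchy_schwarz_pos_op {H : Type*} [NormedAddCommGroup H] [InnerProductSpace ℂ H]
    [CompleteSpace H] {x : H →L[ℂ] H} (hx : x.IsPositive) (a b : H) :
    ‖(⟪x a, b⟫_ℂ)‖ * ‖(⟪x b, a⟫_ℂ)‖ ≤ RCLike.re (⟪x a, a⟫_ℂ) * RCLike.re (⟪x b, b⟫_ℂ) := by
  have hsym : (x : H →ₗ[ℂ] H).IsSymmetric :=
    (ContinuousLinearMap.isSelfAdjoint_iff_isSymmetric).mp hx.isSelfAdjoint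
  letI core : PreInnerProductSpace.Core ℂ H :=
  { inner := fun u v => ⟪x u, v⟫_ℂ
    conj_inner_symm := fun u v => by
      simpa using (hsym.conj_inner_sym v u)
    re_inner_nonneg := fun u => by
      have h := hx.inner_nonneg_left u
      rw [Complex.le_def] at h
      simpa using h.1
    add_left := fun u v w => by simp [inner_add_left]
    smul_left := fun u v r => by simp [inner_smul_left, mul_comm] }
  exact @InnerProductSpace.Core.inner_mul_inner_self_le ℂ H _ _ _ core a b

/-- A positive bounded operator `x` on a complex Hilbert space is the least
upper bound, among the bounded selfadjoint operators with the Loewner order, of the set of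
positive finite-rank operators `y` with `y ≤ x`. -/
theorem positive_operator_is_lub_of_finite_rank_below
    {H : Type*} [NormedAddCommGroup H] [InnerProductSpace ℂ H] [CompleteSpace H]
    (x : H →L[ℂ] H) (hx : LoewnerLE 0 x) :
    (∀ y : H →L[ℂ] H,
        (LoewnerLE 0 y ∧ FiniteDimensional ℂ (LinearMap.range (y : H →ₗ[ℂ] H)) ∧ LoewnerLE y x) →
          LoewnerLE y x) ∧
      (∀ z : H →L[ℂ] H, IsSelfAdjoint z →
        (∀ y : H →L[ℂ] H,
          (LoewnerLE 0 y ∧ FiniteDimensional ℂ (LinearMap.range (y : H →ₗ[ℂ] H)) ∧ LoewnerLE y x) →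
            LoewnerLE y z) →
        LoewnerLE x z) := by
  classical
  refine ⟨fun y h => h.2.2, fun z _hz hub ξ => ?_⟩
  have hxp : x.IsPositive := hx.isPositive
  set c : ℂ := inner ℂ (x ξ) ξ with hc
  have hcre : c = (c.re : ℂ) := by
    have h := hx ξ
    simp only [sub_zero] at h
    rw [Complex.le_def] at h
    exact (Complex.ext_iff.mpr ⟨by simp, by simpa using h.2.symm⟩)
  have hcre_nonneg : 0 ≤ c.re := by
    have h := hx ξ
    simp only [sub_zero] at h
    rw [Complex.le_def] at h
    simpa using h.1
  by_cases hc0 : c = 0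
  · -- use y = 0
    have h0 : LoewnerLE 0 (0 : H →L[ℂ] H) := fun η => by simp
    have hfin : FiniteDimensional ℂ (LinearMap.range ((0 : H →L[ℂ] H) : H →ₗ[ℂ] H)) := by
      have hle : LinearMap.range ((0 : H →L[ℂ] H) : H →ₗ[ℂ] H) ≤ (ℂ ∙ (0 : H)) := by
        rintro _ ⟨η, rfl⟩
        simp [Submodule.zero_mem]
      exact Submodule.finiteDimensional_of_le hle
    have hle0 : LoewnerLE (0 : H →L[ℂ] H) x := fun η => by simpa using hx η
    have := hub 0 ⟨h0, hfin, hle0⟩ ξ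
    simp only [sub_zero] at this
    calc (0 : ℂ) ≤ inner ℂ (z ξ) ξ := this
      _ = inner ℂ ((z - x) ξ) ξ := by
          simp only [ContinuousLinearMap.sub_apply, inner_sub_left, ← hc, hc0, sub_zero]
  · -- rank one operator y
    set y : H →L[ℂ] H := c⁻¹ • ((innerSL ℂ (x ξ)).smulRight (x ξ)) with hy
    have hyapp : ∀ η, y η = (c⁻¹ * inner ℂ (x ξ) η) • x ξ := fun η => by
      simp [hy, mul_smul]
    have hcinv_conj : (starRingEnd ℂ) c⁻¹ = c⁻¹ := by
      rw [hcre]; simp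
    have hyinner : ∀ η, (inner ℂ (y η) η : ℂ) = c⁻¹ * (‖(inner ℂ (x ξ) η : ℂ)‖ ^ 2 : ℝ) := by
      intro η
      rw [hyapp, inner_smul_left, map_mul, hcinv_conj, mul_assoc]
      congr 1
      rw [mul_comm, Complex.mul_conj]
      norm_cast
      simp [Complex.normSq_eq_norm_sq, sq]
    have hcinv_nonneg : (0 : ℂ) ≤ c⁻¹ := by
      rw [hcre]
      norm_cast
      positivity
    -- y is positive
    have hypos : LoewnerLE 0 y := by
      intro η
      simp only [sub_zero]
      rw [hyinner]
      apply mul_nonneg hcinv_nonneg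
      norm_cast
      positivity
    -- y has finite rank
    have hyfin : FiniteDimensional ℂ (LinearMap.range (y : H →ₗ[ℂ] H)) := by
      have hle : LinearMap.range (y : H →ₗ[ℂ] H) ≤ (ℂ ∙ (x ξ)) := by
        rintro _ ⟨η, rfl⟩
        rw [ContinuousLinearMap.coe_coe, hyapp]
        exact Submodule.smul_mem _ _ (Submodule.mem_span_singleton_self _)
      exact Submodule.finiteDimensional_of_le hle
    -- y ≤ x
    have hylex : LoewnerLE y x := by
      intro η
      have hcs := cauchy_schwarz_pos_op hxp ξ η
      have hsym : (x : H →ₗ[ℂ] H).IsSymmetric :=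
        (ContinuousLinearMap.isSelfAdjoint_iff_isSymmetric).mp hxp.isSelfAdjoint
      have hsymC : ∀ a b : H, (inner ℂ (x a) b : ℂ) = inner ℂ a (x b) := fun a b => hsym a b
      have hnormsym : ‖(inner ℂ (x η) ξ : ℂ)‖ = ‖(inner ℂ (x ξ) η : ℂ)‖ := by
        rw [hsymC η ξ]
        exact norm_inner_symm η (x ξ)
      rw [hnormsym, ← sq] at hcs
      have hxηre : (inner ℂ (x η) η : ℂ) = ((inner ℂ (x η) η : ℂ).re : ℂ) := by
        have h := hx η
        simp only [sub_zero] at h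
        rw [Complex.le_def] at h
        exact (Complex.ext_iff.mpr ⟨by simp, by simpa using h.2.symm⟩)
      have hxηre_nonneg : 0 ≤ (inner ℂ (x η) η : ℂ).re := by
        have h := hx η
        simp only [sub_zero] at h
        rw [Complex.le_def] at h
        simpa using h.1
      have hcrepos : 0 < c.re := by
        rcases lt_or_eq_of_le hcre_nonneg with h | h
        · exact h
        · exact absurd (by rw [hcre, ← h]; simp) hc0
      simp only [ContinuousLinearMap.sub_apply, inner_sub_left]
      rw [hyinner, hcre]
      have key : (c.re)⁻¹ * ‖(inner ℂ (x ξ) η : ℂ)‖ ^ 2 ≤ (inner ℂ (x η) η : ℂ).re := by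
        rw [inv_mul_le_iff₀ hcrepos]
        calc ‖(inner ℂ (x ξ) η : ℂ)‖ ^ 2
            ≤ RCLike.re (inner ℂ (x ξ) ξ : ℂ) * RCLike.re (inner ℂ (x η) η : ℂ) := hcs
          _ = c.re * (inner ℂ (x η) η : ℂ).re := by simp [RCLike.re_to_complex, hc]
      rw [hxηre, ← Complex.ofReal_inv, ← Complex.ofReal_mul, ← Complex.ofReal_sub,
        Complex.zero_le_real]
      linarith [key]
    -- y ξ = x ξ
    have hyxi : y ξ = x ξ := by
      rw [hyapp, ← hc, inv_mul_cancel₀ hc0, one_smul]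
    have := hub y ⟨hypos, hyfin, hylex⟩ ξ
    simpa only [ContinuousLinearMap.sub_apply, inner_sub_left, hyxi] using this
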